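/- Let (p_1,...,p_n) be a probability distribution with p_1 ≤ p_2 ≤ ... ≤ p_n, let δ be its total variation distance from the uniform distribution on [n], and let I be a random index distributed according to (p_1,...,p_n). Let J be a random index such that conditioned on I = ℓ, J is uniform on [n]\{ℓ}. Then Pr(I < J) ≤ 1/2 − δ/2. -/

import Mathlib

open Finset

lemma gauss_real (m : ℕ) : ∑ i ∈ range m, (i:ℝ) = m*(m-1)/2 := by
  induction m with
  | zero => simp
  | succ k ih => rw [Finset.sum_range_succ, ih]; push_cast; ring

lemma sum_d_Ico (n j : ℕ) (hj : j ≤ n) :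
    ∑ ℓ ∈ Ico j n, (2*(ℓ:ℝ) - ((n:ℝ)-1)) = (j:ℝ) * ((n:ℝ) - j) := by
  rw [Finset.sum_Ico_eq_sum_range]
  have h1 : ∀ i ∈ range (n - j), (2*((j+i:ℕ):ℝ) - ((n:ℝ)-1))
      = 2*(i:ℝ) + (2*(j:ℝ) - ((n:ℝ)-1)) := by
    intro i _; push_cast; ring
  rw [Finset.sum_congr rfl h1, Finset.sum_add_distrib, Finset.sum_const, ← Finset.mul_sum,
    gauss_real, card_range]
  have h2 : ((n-j:ℕ):ℝ) = (n:ℝ) - j := by push_cast [Nat.cast_sub hj]; ring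
  simp only [nsmul_eq_mul, h2]
  ring

lemma key (n : ℕ) (hn : 2 ≤ n) (q : ℕ → ℝ)
    (hmono : ∀ i j, i ≤ j → j < n → q i ≤ q j)
    (hsum : ∑ ℓ ∈ range n, q ℓ = 0) :
    ((n:ℝ)-1)/2 * ∑ ℓ ∈ range n, |q ℓ| ≤
      ∑ ℓ ∈ range n, q ℓ * (2*(ℓ:ℝ) - ((n:ℝ)-1)) := by
  have hn0 : (0:ℝ) < n := by positivity
  set s : ℕ → ℝ := fun j => q j - q (j-1) with hs_def
  set a : ℕ → ℕ → ℝ := fun j ℓ => (if j ≤ ℓ then (1:ℝ) else 0) - ((n:ℝ)-j)/n with ha_def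
  have hs : ∀ j ∈ Ico 1 n, 0 ≤ s j := by
    intro j hj
    rw [mem_Ico] at hj
    exact sub_nonneg.2 (hmono (j-1) j (by omega) hj.2)
  -- telescoping
  have htel : ∀ ℓ, ℓ < n → ∑ j ∈ Ico 1 (ℓ+1), s j = q ℓ - q 0 := by
    intro ℓ hℓ
    rw [Finset.sum_Ico_eq_sum_range]
    have : ∀ i ∈ range (ℓ+1-1), s (1+i) = q (i+1) - q i := by
      intro i _
      simp only [hs_def, Nat.add_comm 1 i, Nat.add_sub_cancel]
    rw [Finset.sum_congr rfl this]
    simp [Finset.sum_range_sub (fun i => q i) ℓ]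
  have hite : ∀ ℓ, ℓ < n → ∑ j ∈ Ico 1 n, (if j ≤ ℓ then s j else 0) = q ℓ - q 0 := by
    intro ℓ hℓ
    rw [← Finset.sum_filter]
    have : (Ico 1 n).filter (fun j => j ≤ ℓ) = Ico 1 (ℓ+1) := by
      ext x; simp only [mem_filter, mem_Ico]; omega
    rw [this, htel ℓ hℓ]
  have hcount : ∀ j, j ≤ n → ∑ ℓ ∈ range n, (if j ≤ ℓ then (1:ℝ) else 0) = (n:ℝ) - j := by
    intro j hj
    rw [← Finset.sum_filter]
    have : (range n).filter (fun ℓ => j ≤ ℓ) = Ico j n := by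
      ext x; simp only [mem_filter, mem_range, mem_Ico]; omega
    rw [this]
    simp [Nat.cast_sub hj]
  have hq0 : (n:ℝ) * q 0 + ∑ j ∈ Ico 1 n, s j * ((n:ℝ)-j) = 0 := by
    rw [← hsum]
    have h1 : ∀ ℓ ∈ range n, q ℓ = q 0 + ∑ j ∈ Ico 1 n, (if j ≤ ℓ then s j else 0) := by
      intro ℓ hℓ
      rw [mem_range] at hℓ
      rw [hite ℓ hℓ]; ring
    rw [Finset.sum_congr rfl h1, Finset.sum_add_distrib, Finset.sum_const, card_range,
      Finset.sum_comm]
    have h2 : ∀ j ∈ Ico 1 n, ∑ ℓ ∈ range n, (if j ≤ ℓ then s j else 0)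
        = s j * ((n:ℝ) - j) := by
      intro j hj
      rw [mem_Ico] at hj
      have : ∀ ℓ ∈ range n, (if j ≤ ℓ then s j else 0) = s j * (if j ≤ ℓ then (1:ℝ) else 0) := by
        intro ℓ _; split <;> ring
      rw [Finset.sum_congr rfl this, ← Finset.mul_sum, hcount j hj.2.le]
    rw [Finset.sum_congr rfl h2, nsmul_eq_mul]
  have hrep : ∀ ℓ ∈ range n, q ℓ = ∑ j ∈ Ico 1 n, s j * a j ℓ := by
    intro ℓ hℓ
    rw [mem_range] at hℓ
    have h1 : ∀ j ∈ Ico 1 n, s j * a j ℓ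
        = (if j ≤ ℓ then s j else 0) - (1/n) * (s j * ((n:ℝ)-j)) := by
      intro j hj
      simp only [ha_def]
      split <;> field_simp <;> ring
    rw [Finset.sum_congr rfl h1, Finset.sum_sub_distrib, hite ℓ hℓ, ← Finset.mul_sum]
    have : q 0 = -(1/n) * ∑ j ∈ Ico 1 n, s j * ((n:ℝ)-j) := by
      field_simp
      linarith [hq0]
    rw [this]; ring
  have ha' : ∀ j ℓ, a j ℓ = (if j ≤ ℓ then (1:ℝ) else 0) - ((n:ℝ)-(j:ℝ))/n :=
    fun j ℓ => rfl
  have habs : ∀ j ∈ Ico 1 n, ∑ ℓ ∈ range n, |a j ℓ| = 2*(j:ℝ)*((n:ℝ)-j)/n := by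
    intro j hj
    rw [mem_Ico] at hj
    have hjn : (j:ℝ) ≤ n := by exact_mod_cast hj.2.le
    have hj0 : (0:ℝ) ≤ j := by positivity
    rw [range_eq_Ico, ← Finset.sum_Ico_consecutive _ (Nat.zero_le j) hj.2.le]
    have h1 : ∀ ℓ ∈ Ico 0 j, |a j ℓ| = ((n:ℝ)-j)/n := by
      intro ℓ hℓ
      rw [mem_Ico] at hℓ
      have hne : ¬ (j ≤ ℓ) := by omega
      rw [ha', if_neg hne, zero_sub, abs_neg, abs_of_nonneg (div_nonneg (by linarith) hn0.le)]
    have h2 : ∀ ℓ ∈ Ico j n, |a j ℓ| = (j:ℝ)/n := by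
      intro ℓ hℓ
      rw [mem_Ico] at hℓ
      rw [ha', if_pos hℓ.1,
        show (1:ℝ) - ((n:ℝ)-j)/n = (j:ℝ)/n by field_simp; ring,
        abs_of_nonneg (by positivity)]
    rw [Finset.sum_congr rfl h1, Finset.sum_congr rfl h2, Finset.sum_const, Finset.sum_const,
      Nat.card_Ico, Nat.card_Ico, nsmul_eq_mul, nsmul_eq_mul, Nat.sub_zero,
      Nat.cast_sub hj.2.le]
    field_simp
    ring
  have hd : ∀ j ∈ Ico 1 n, ∑ ℓ ∈ range n, a j ℓ * (2*(ℓ:ℝ) - ((n:ℝ)-1))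
      = (j:ℝ)*((n:ℝ)-j) := by
    intro j hj
    rw [mem_Ico] at hj
    have h1 : ∀ ℓ ∈ range n, a j ℓ * (2*(ℓ:ℝ) - ((n:ℝ)-1))
        = (if j ≤ ℓ then (2*(ℓ:ℝ) - ((n:ℝ)-1)) else 0)
          - ((n:ℝ)-j)/n * (2*(ℓ:ℝ) - ((n:ℝ)-1)) := by
      intro ℓ _
      rw [ha']; split <;> ring
    rw [Finset.sum_congr rfl h1, Finset.sum_sub_distrib, ← Finset.mul_sum, ← Finset.sum_filter]
    have h2 : (range n).filter (fun ℓ => j ≤ ℓ) = Ico j n := by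
      ext x; simp only [mem_filter, mem_range, mem_Ico]; omega
    rw [h2, sum_d_Ico n j hj.2.le, range_eq_Ico, sum_d_Ico n 0 (Nat.zero_le n)]
    simp
  have hA : ∑ ℓ ∈ range n, q ℓ * (2*(ℓ:ℝ) - ((n:ℝ)-1))
      = ∑ j ∈ Ico 1 n, s j * ((j:ℝ)*((n:ℝ)-j)) := by
    have h1 : ∀ ℓ ∈ range n, q ℓ * (2*(ℓ:ℝ) - ((n:ℝ)-1))
        = ∑ j ∈ Ico 1 n, s j * (a j ℓ * (2*(ℓ:ℝ) - ((n:ℝ)-1))) := by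
      intro ℓ hℓ
      rw [hrep ℓ hℓ, Finset.sum_mul]
      exact Finset.sum_congr rfl (fun j _ => by ring)
    rw [Finset.sum_congr rfl h1, Finset.sum_comm]
    refine Finset.sum_congr rfl (fun j hj => ?_)
    rw [← Finset.mul_sum, hd j hj]
  have hB : ∑ ℓ ∈ range n, |q ℓ| ≤ ∑ j ∈ Ico 1 n, s j * (2*(j:ℝ)*((n:ℝ)-j)/n) := by
    have h1 : ∀ ℓ ∈ range n, |q ℓ| ≤ ∑ j ∈ Ico 1 n, s j * |a j ℓ| := by
      intro ℓ hℓ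
      rw [hrep ℓ hℓ]
      refine (Finset.abs_sum_le_sum_abs _ _).trans_eq ?_
      exact Finset.sum_congr rfl (fun j hj => by rw [abs_mul, abs_of_nonneg (hs j hj)])
    refine (Finset.sum_le_sum h1).trans_eq ?_
    rw [Finset.sum_comm]
    refine Finset.sum_congr rfl (fun j hj => ?_)
    rw [← Finset.mul_sum, habs j hj]
  rw [hA]
  calc ((n:ℝ)-1)/2 * ∑ ℓ ∈ range n, |q ℓ|
      ≤ ((n:ℝ)-1)/2 * ∑ j ∈ Ico 1 n, s j * (2*(j:ℝ)*((n:ℝ)-j)/n) := by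
        apply mul_le_mul_of_nonneg_left hB
        have : (2:ℝ) ≤ n := by exact_mod_cast hn
        linarith
    _ ≤ ∑ j ∈ Ico 1 n, s j * ((j:ℝ)*((n:ℝ)-j)) := by
        rw [Finset.mul_sum]
        refine Finset.sum_le_sum (fun j hj => ?_)
        have hsj := hs j hj
        rw [mem_Ico] at hj
        have hjn : (j:ℝ) ≤ n := by exact_mod_cast hj.2.le
        have hj0 : (0:ℝ) ≤ j := by positivity
        have h2 : (2:ℝ) ≤ n := by exact_mod_cast hn
        have heq : ((n:ℝ)-1)/2 * (s j * (2*(j:ℝ)*((n:ℝ)-j)/n))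
            = s j * ((j:ℝ)*((n:ℝ)-j)) * (((n:ℝ)-1)/n) := by
          field_simp
        have hfrac : ((n:ℝ)-1)/n ≤ 1 := by
          rw [div_le_one hn0]; linarith
        have hnn : 0 ≤ s j * ((j:ℝ)*((n:ℝ)-j)) := by
          apply mul_nonneg hsj
          apply mul_nonneg hj0
          linarith
        calc ((n:ℝ)-1)/2 * (s j * (2*(j:ℝ)*((n:ℝ)-j)/n))
            = s j * ((j:ℝ)*((n:ℝ)-j)) * (((n:ℝ)-1)/n) := heq
          _ ≤ s j * ((j:ℝ)*((n:ℝ)-j)) * 1 := mul_le_mul_of_nonneg_left hfrac hnn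
          _ = s j * ((j:ℝ)*((n:ℝ)-j)) := by ring

/-- Claim 3.2 of the paper: for a monotone nondecreasing probability vector `p`
on `[n]` at total variation distance `δ` from uniform, with `I ∼ p` and `J`
uniform on `[n] \ {I}`, we have `Pr(I < J) = ∑_ℓ p_ℓ·(n−ℓ)/(n−1) ≤ 1/2 − δ/2`. -/
theorem pr_lt_le_half_sub {n : ℕ} (hn : 2 ≤ n) (p : Fin n → ℝ)
    (h0 : ∀ ℓ, 0 ≤ p ℓ) (h1 : ∑ ℓ, p ℓ = 1) (hmono : Monotone p)
    (δ : ℝ) (hδ : δ = (1/2) * ∑ ℓ, |p ℓ - 1 / (n : ℝ)|) :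
    ∑ ℓ : Fin n, p ℓ * (((n : ℝ) - 1 - (ℓ.val : ℝ)) / ((n : ℝ) - 1)) ≤ 1/2 - δ/2 := by
  have hn0 : (0:ℝ) < n := by positivity
  have hn2 : (2:ℝ) ≤ n := by exact_mod_cast hn
  have hn1 : (0:ℝ) < (n:ℝ) - 1 := by linarith
  set q : ℕ → ℝ := fun ℓ => if h : ℓ < n then p ⟨ℓ, h⟩ - 1/n else 0 with hq_def
  have hqv : ∀ ℓ : Fin n, q ℓ.val = p ℓ - 1/n := by
    intro ℓ
    simp [hq_def, ℓ.isLt]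
  have hqmono : ∀ i j, i ≤ j → j < n → q i ≤ q j := by
    intro i j hij hjn
    have hin : i < n := lt_of_le_of_lt hij hjn
    simp only [hq_def, dif_pos hin, dif_pos hjn]
    have := hmono (show (⟨i, hin⟩ : Fin n) ≤ ⟨j, hjn⟩ from hij)
    linarith
  have hqsum : ∑ ℓ ∈ Finset.range n, q ℓ = 0 := by
    rw [← Fin.sum_univ_eq_sum_range q n]
    have : ∀ ℓ : Fin n, q ℓ.val = p ℓ - 1/n := hqv
    rw [Finset.sum_congr rfl (fun ℓ _ => this ℓ), Finset.sum_sub_distrib, h1,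
      Finset.sum_const, Finset.card_univ, Fintype.card_fin, nsmul_eq_mul]
    field_simp; norm_num
  set A := ∑ ℓ ∈ Finset.range n, q ℓ * (2*(ℓ:ℝ) - ((n:ℝ)-1)) with hA_def
  set B := ∑ ℓ ∈ Finset.range n, |q ℓ| with hB_def
  have hkey : ((n:ℝ)-1)/2 * B ≤ A := key n hn q hqmono hqsum
  have hδB : δ = B/2 := by
    have hBe : ∑ ℓ : Fin n, |p ℓ - 1/(n:ℝ)| = B := by
      rw [hB_def, ← Fin.sum_univ_eq_sum_range (fun ℓ => |q ℓ|) n]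
      exact Finset.sum_congr rfl (fun ℓ _ => by rw [hqv ℓ])
    rw [hδ, hBe]
    ring
  have hPd : ∑ ℓ : Fin n, p ℓ * (2*(ℓ.val:ℝ) - ((n:ℝ)-1)) = A := by
    have hpt : ∀ ℓ : Fin n, p ℓ * (2*(ℓ.val:ℝ) - ((n:ℝ)-1))
        = q ℓ.val * (2*(ℓ.val:ℝ) - ((n:ℝ)-1)) + (1/n) * (2*(ℓ.val:ℝ) - ((n:ℝ)-1)) := by
      intro ℓ
      rw [hqv ℓ]; ring
    rw [Finset.sum_congr rfl (fun ℓ _ => hpt ℓ), Finset.sum_add_distrib,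
      Fin.sum_univ_eq_sum_range (fun ℓ => q ℓ * (2*(ℓ:ℝ) - ((n:ℝ)-1))) n,
      ← Finset.mul_sum,
      Fin.sum_univ_eq_sum_range (fun ℓ => 2*(ℓ:ℝ) - ((n:ℝ)-1)) n,
      Finset.range_eq_Ico, sum_d_Ico n 0 (Nat.zero_le n)]
    simp [hA_def]
  have hLHS : ∑ ℓ : Fin n, p ℓ * (((n : ℝ) - 1 - (ℓ.val : ℝ)) / ((n : ℝ) - 1))
      = 1/2 - A/(2*((n:ℝ)-1)) := by
    have hpt : ∀ ℓ : Fin n, p ℓ * (((n : ℝ) - 1 - (ℓ.val : ℝ)) / ((n : ℝ) - 1))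
        = p ℓ * (1/2) - (p ℓ * (2*(ℓ.val:ℝ) - ((n:ℝ)-1))) / (2*((n:ℝ)-1)) := by
      intro ℓ
      field_simp
      ring
    rw [Finset.sum_congr rfl (fun ℓ _ => hpt ℓ), Finset.sum_sub_distrib,
      ← Finset.sum_mul, h1, ← Finset.sum_div, hPd]
    ring
  rw [hLHS, hδB]
  have h4 : B/2/2 ≤ A/(2*((n:ℝ)-1)) := by
    rw [div_le_div_iff₀ (by norm_num) (by linarith)]
    nlinarith [hkey]
  linarith
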